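/- Let C ⊆ ℝⁿ be a closed convex cone, V ⊆ C a closed convex subcone, and v ∈ ℚⁿ a nonzero rational vector with ray R = ℝ_{≥0}·v, such that C = V + R and v ∉ V. Suppose there exists a linear functional H with H(v) = 0 and H(x) > 0 for all x ∈ V \ {0}. Then there exists a linear functional H′ with rational coefficients such that H′(v) = 0 and H′(x) > 0 for all x ∈ V \ {0}; consequently H′ ≥ 0 on C and {x ∈ C : H′(x) = 0} = R. -/

import Mathlib

/-- The ray `ℝ_{≥0} · v` spanned by a vector `v`. -/
def rayOf {E : Type*} [SMul ℝ E] (v : E) : Set E := {x | ∃ t : ℝ, 0 ≤ t ∧ x = t • v}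

/-- Dot-product linear functional with coefficient vector `w`. -/
noncomputable def dotLM (n : ℕ) (w : Fin n → ℝ) : (Fin n → ℝ) →ₗ[ℝ] ℝ where
  toFun x := ∑ i, w i * x i
  map_add' x y := by simp [mul_add, Finset.sum_add_distrib]
  map_smul' c x := by
    simp only [Pi.smul_apply, smul_eq_mul, RingHom.id_apply, Finset.mul_sum]
    exact Finset.sum_congr rfl fun i _ => by ring

lemma dotLM_single (n : ℕ) (w : Fin n → ℝ) (i : Fin n) :
    dotLM n w (Pi.single i 1) = w i := by
  simp [dotLM, Pi.single_apply]

lemma lm_eq_sum (n : ℕ) (G : (Fin n → ℝ) →ₗ[ℝ] ℝ) (x : Fin n → ℝ) :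
    G x = ∑ i, G (Pi.single i 1) * x i := by
  rw [LinearMap.pi_apply_eq_sum_univ]
  refine Finset.sum_congr rfl fun i _ => ?_
  rw [smul_eq_mul, mul_comm]
  congr 2
  funext j
  simp [Pi.single_apply, eq_comm]

/-- Let C ⊆ ℝⁿ be a closed convex cone, V ⊆ C a closed convex subcone, and v a nonzero
rational vector with ray R = ℝ_{≥0}·v, such that C = V + R and v ∉ V. Suppose there is a
linear functional H with H(v) = 0 and H > 0 on V \ {0}. Then there is a linear
functional H′ with rational coefficients such that H′(v) = 0 and H′ > 0 on V \ {0};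
consequently H′ ≥ 0 on C and {x ∈ C : H′(x) = 0} = R. -/
theorem stmt_10 (n : ℕ) (C V : ConvexCone ℝ (Fin n → ℝ))
    (hCclosed : IsClosed (C : Set (Fin n → ℝ)))
    (hVclosed : IsClosed (V : Set (Fin n → ℝ)))
    (hV0 : (0 : Fin n → ℝ) ∈ V)
    (hVC : (V : Set (Fin n → ℝ)) ⊆ (C : Set (Fin n → ℝ)))
    (v : Fin n → ℝ) (hv : v ≠ 0) (hvrat : ∀ i, ∃ q : ℚ, v i = (q : ℝ))
    (R : Set (Fin n → ℝ)) (hR : R = rayOf v)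
    (hsum : (C : Set (Fin n → ℝ)) =
      {x | ∃ a ∈ (V : Set (Fin n → ℝ)), ∃ r ∈ R, x = a + r})
    (hvV : v ∉ V)
    (H : (Fin n → ℝ) →ₗ[ℝ] ℝ) (hHv : H v = 0)
    (hHpos : ∀ x ∈ V, x ≠ 0 → 0 < H x) :
    ∃ H' : (Fin n → ℝ) →ₗ[ℝ] ℝ,
      (∀ i, ∃ q : ℚ, H' (Pi.single i 1) = (q : ℝ)) ∧
      H' v = 0 ∧ (∀ x ∈ V, x ≠ 0 → 0 < H' x) ∧
      (∀ x ∈ C, 0 ≤ H' x) ∧ {x | x ∈ C ∧ H' x = 0} = R := by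
  classical
  obtain ⟨i₀, hi₀⟩ : ∃ i, v i ≠ 0 := by
    by_contra h; push_neg at h; exact hv (funext h)
  choose qv hqv using hvrat
  have hqvi₀ : qv i₀ ≠ 0 := fun h => hi₀ (by rw [hqv, h]; simp)
  set w : Fin n → ℝ := fun i => H (Pi.single i 1) with hw
  have hHw : ∀ x, H x = ∑ i, w i * x i := fun x => lm_eq_sum n H x
  -- minimum of H on V ∩ sphere
  obtain ⟨ε, hε, hεmin⟩ : ∃ ε : ℝ, 0 < ε ∧ ∀ x ∈ V, ‖x‖ = 1 → ε ≤ H x := by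
    by_cases hne : ((V : Set (Fin n → ℝ)) ∩ Metric.sphere 0 1).Nonempty
    · obtain ⟨x₀, hx₀, hmin⟩ :=
        ((isCompact_sphere (0 : Fin n → ℝ) 1).inter_left hVclosed).exists_isMinOn hne
          (H.continuous_of_finiteDimensional.continuousOn)
      refine ⟨H x₀, hHpos x₀ hx₀.1 ?_, fun x hx hxn =>
        hmin ⟨hx, by simpa [mem_sphere_zero_iff_norm] using hxn⟩⟩
      intro h0
      have := hx₀.2
      rw [h0] at this
      simp [mem_sphere_zero_iff_norm] at this
    · exact ⟨1, one_pos, fun x hx hxn =>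
        absurd ⟨x, hx, by simpa [mem_sphere_zero_iff_norm] using hxn⟩ hne⟩
  set S : ℝ := ∑ j, |v j| with hSdef
  have hvabs : 0 < |v i₀| := abs_pos.mpr hi₀
  have hS0 : 0 ≤ S := Finset.sum_nonneg fun j _ => abs_nonneg _
  set M : ℝ := n + S / |v i₀| + 1 with hMdef
  have hM : 0 < M := by positivity
  set δ : ℝ := ε / M with hδdef
  have hδ : 0 < δ := div_pos hε hM
  have hδM : δ * M = ε := div_mul_cancel₀ ε (ne_of_gt hM)
  choose q hq using fun j => exists_rat_near (w j) hδ
  set q' : Fin n → ℚ := fun j =>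
    if j = i₀ then -(∑ j ∈ Finset.univ.erase i₀, q j * qv j) / qv i₀ else q j with hq'def
  set w' : Fin n → ℝ := fun i => (q' i : ℝ) with hw'def
  -- H' v = 0
  have hqsum : ∑ i, q' i * qv i = 0 := by
    rw [← Finset.add_sum_erase _ _ (Finset.mem_univ i₀)]
    have h1 : ∀ j ∈ Finset.univ.erase i₀, q' j * qv j = q j * qv j := fun j hj => by
      simp only [hq'def, if_neg (Finset.ne_of_mem_erase hj)]
    rw [Finset.sum_congr rfl h1]
    simp only [hq'def, if_pos rfl]
    field_simp
    ring
  have hw'v : ∑ i, w' i * v i = 0 := by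
    have h2 : ∑ i, w' i * v i = ((∑ i, q' i * qv i : ℚ) : ℝ) := by
      push_cast
      exact Finset.sum_congr rfl fun i _ => by rw [hqv]
    rw [h2, hqsum]; norm_num
  have hH'v : dotLM n w' v = 0 := hw'v
  -- the key bound
  have hkey : ∑ i, |w' i - w i| < ε := by
    have herase : ∀ j ∈ Finset.univ.erase i₀, |w' j - w j| ≤ δ := fun j hj => by
      simp only [hw'def, hq'def, if_neg (Finset.ne_of_mem_erase hj)]
      rw [abs_sub_comm]; exact (hq j).le
    have h0 : ∑ i, w i * v i = 0 := by rw [← hHw v]; exact hHv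
    have hwv : w i₀ * v i₀ = -∑ j ∈ Finset.univ.erase i₀, w j * v j := by
      rw [← Finset.add_sum_erase _ (fun i => w i * v i) (Finset.mem_univ i₀)] at h0
      linarith
    have hw'v2 : w' i₀ * v i₀ = -∑ j ∈ Finset.univ.erase i₀, w' j * v j := by
      rw [← Finset.add_sum_erase _ (fun i => w' i * v i) (Finset.mem_univ i₀)] at hw'v
      linarith
    have hi₀bound : |w' i₀ - w i₀| ≤ δ * S / |v i₀| := by
      have h1 : (w' i₀ - w i₀) * v i₀ = ∑ j ∈ Finset.univ.erase i₀, (w j - w' j) * v j := by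
        rw [sub_mul, hwv, hw'v2, neg_sub_neg, ← Finset.sum_sub_distrib]
        exact Finset.sum_congr rfl fun j _ => by ring
      have h2 : |w' i₀ - w i₀| * |v i₀| ≤ δ * S := by
        rw [← abs_mul, h1]
        calc |∑ j ∈ Finset.univ.erase i₀, (w j - w' j) * v j|
            ≤ ∑ j ∈ Finset.univ.erase i₀, |(w j - w' j) * v j| :=
              Finset.abs_sum_le_sum_abs _ _
          _ ≤ ∑ j ∈ Finset.univ.erase i₀, δ * |v j| := by
              refine Finset.sum_le_sum fun j hj => ?_
              rw [abs_mul]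
              have hb : |w j - w' j| ≤ δ := by rw [abs_sub_comm]; exact herase j hj
              exact mul_le_mul_of_nonneg_right hb (abs_nonneg _)
          _ = δ * ∑ j ∈ Finset.univ.erase i₀, |v j| := (Finset.mul_sum _ _ _).symm
          _ ≤ δ * S := by
              refine mul_le_mul_of_nonneg_left ?_ hδ.le
              exact Finset.sum_le_sum_of_subset_of_nonneg (Finset.erase_subset _ _)
                (fun j _ _ => abs_nonneg _)
      rw [le_div_iff₀ hvabs]
      exact h2
    calc ∑ i, |w' i - w i|
        = |w' i₀ - w i₀| + ∑ j ∈ Finset.univ.erase i₀, |w' j - w j| :=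
          (Finset.add_sum_erase _ _ (Finset.mem_univ i₀)).symm
      _ ≤ δ * S / |v i₀| + ∑ j ∈ Finset.univ.erase i₀, δ :=
          add_le_add hi₀bound (Finset.sum_le_sum herase)
      _ ≤ δ * S / |v i₀| + n * δ := by
          rw [Finset.sum_const, nsmul_eq_mul]
          have hcard : ((Finset.univ.erase i₀).card : ℝ) ≤ n := by
            have := Finset.card_erase_le (s := (Finset.univ : Finset (Fin n))) (a := i₀)
            have hn : (Finset.univ : Finset (Fin n)).card = n := Finset.card_univ.trans (Fintype.card_fin n)
            exact_mod_cast hn ▸ this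
          exact add_le_add le_rfl (mul_le_mul_of_nonneg_right hcard hδ.le)
      _ < ε := by
          have hrw : δ * S / |v i₀| = δ * (S / |v i₀|) := mul_div_assoc _ _ _
          have hexp : δ * (S / |v i₀|) + ↑n * δ = δ * M - δ := by rw [hMdef]; ring
          rw [hrw, hexp, hδM]
          linarith
  -- positivity on V \ {0}
  have hpos : ∀ x ∈ V, x ≠ 0 → 0 < dotLM n w' x := by
    intro x hx hx0
    have hxn : 0 < ‖x‖ := norm_pos_iff.mpr hx0
    set y := ‖x‖⁻¹ • x with hy
    have hyV : y ∈ V := V.smul_mem (inv_pos.mpr hxn) hx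
    have hyn : ‖y‖ = 1 := by
      rw [hy, norm_smul, norm_inv, norm_norm, inv_mul_cancel₀ (ne_of_gt hxn)]
    have hdiff : |dotLM n w' y - H y| < ε := by
      have heq : dotLM n w' y - H y = ∑ i, (w' i - w i) * y i := by
        have hG : dotLM n w' y = ∑ i, w' i * y i := rfl
        rw [hG, hHw y, ← Finset.sum_sub_distrib]
        exact Finset.sum_congr rfl fun i _ => by ring
      rw [heq]
      calc |∑ i, (w' i - w i) * y i| ≤ ∑ i, |(w' i - w i) * y i| :=
            Finset.abs_sum_le_sum_abs _ _
        _ ≤ ∑ i, |w' i - w i| := by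
            refine Finset.sum_le_sum fun i _ => ?_
            rw [abs_mul]
            refine mul_le_of_le_one_right (abs_nonneg _) ?_
            rw [← Real.norm_eq_abs, ← hyn]
            exact norm_le_pi_norm y i
        _ < ε := hkey
    have hypos : 0 < dotLM n w' y := by
      have h1 := hεmin y hyV hyn
      have h2 := (abs_lt.mp hdiff).1
      linarith
    have hxy : x = ‖x‖ • y := by
      rw [hy, smul_smul, mul_inv_cancel₀ (ne_of_gt hxn), one_smul]
    rw [hxy, map_smul, smul_eq_mul]
    exact mul_pos hxn hypos
  -- nonnegativity on C
  have hnonneg : ∀ x ∈ C, 0 ≤ dotLM n w' x := by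
    intro x hx
    have hx' : x ∈ (C : Set (Fin n → ℝ)) := hx
    rw [hsum] at hx'
    obtain ⟨a, ha, r, hr, rfl⟩ := hx'
    rw [hR] at hr
    obtain ⟨t, ht, rfl⟩ := hr
    rw [map_add, map_smul, hH'v, smul_zero, add_zero]
    by_cases ha0 : a = 0
    · simp [ha0]
    · exact (hpos a ha ha0).le
  -- zero set
  have hzero : {x | x ∈ C ∧ dotLM n w' x = 0} = R := by
    ext x
    constructor
    · rintro ⟨hxC, hx0⟩
      have hx' : x ∈ (C : Set (Fin n → ℝ)) := hxC
      rw [hsum] at hx'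
      obtain ⟨a, ha, r, hr, rfl⟩ := hx'
      rw [hR] at hr ⊢
      obtain ⟨t, ht, rfl⟩ := hr
      have h1 : dotLM n w' (a + t • v) = dotLM n w' a := by
        rw [map_add, map_smul, hH'v, smul_zero, add_zero]
      have ha0 : a = 0 := by
        by_contra h
        have := hpos a ha h
        rw [h1] at hx0
        linarith
      exact ⟨t, ht, by rw [ha0, zero_add]⟩
    · intro hxR
      have hxC : x ∈ (C : Set (Fin n → ℝ)) := by
        rw [hsum]; exact ⟨0, hV0, x, hxR, (zero_add x).symm⟩
      refine ⟨hxC, ?_⟩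
      rw [hR] at hxR
      obtain ⟨t, ht, rfl⟩ := hxR
      rw [map_smul, hH'v, smul_zero]
  exact ⟨dotLM n w', fun i => ⟨q' i, dotLM_single n w' i⟩, hH'v, hpos, hnonneg, hzero⟩
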